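/- Let n ≥ 2 and k ≥ 1 be integers with k dividing n, and set m = n/k. Assume m is odd, and let C = { (i−1)·m + (m+1)/2 : i = 1,…,k } be the cluster consisting of the median position of each of the k consecutive blocks of m positions. Then EMD(C) = (n+k)(n−k) / (4·n·(n−1)·k); in particular, the lower bound (n+k)(n−k)/(4n(n−1)k) on the Earth Mover's Distance of clusters of size k is attained. -/

import Mathlib

/-- The Earth Mover's Distance (with the ordered distance) between the uniform
distribution on a cluster `C ⊆ {1,…,n}` of `k` records and the uniform
distribution on the whole data set `{1,…,n}`. -/
noncomputable def EMD (n k : ℕ) (C : Finset ℕ) : ℝ :=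
  (1 / ((n : ℝ) - 1)) * ∑ i ∈ Finset.Icc 1 n,
    |∑ j ∈ Finset.Icc 1 i, ((if j ∈ C then (1 : ℝ) / k else 0) - 1 / n)|

/-- If `k ∣ n`, `m = n/k` is odd, and `C` consists of the median position of
each of the `k` consecutive blocks of `m` positions, then the EMD of `C`
equals the lower bound `(n+k)(n−k)/(4n(n−1)k)`; in particular the lower bound
is attained. -/
theorem emd_lower_bound_attained (n k m : ℕ) (hn : 2 ≤ n) (hk : 1 ≤ k)
    (hdvd : k ∣ n) (hm : m = n / k) (hmodd : Odd m)
    (C : Finset ℕ)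
    (hC : C = (Finset.Icc 1 k).image (fun i => (i - 1) * m + (m + 1) / 2)) :
    EMD n k C = ((n : ℝ) + k) * ((n : ℝ) - k) / (4 * n * ((n : ℝ) - 1) * k) := by
  classical
  obtain ⟨t, ht⟩ := hmodd
  have hm' : m = 2 * t + 1 := by omega
  have hmpos : 0 < m := by omega
  have hnkm : n = k * m := by rw [hm, Nat.mul_div_cancel' hdvd]
  have hmed : (m + 1) / 2 = t + 1 := by omega
  set f : ℕ → ℕ := fun i => (i - 1) * m + (m + 1) / 2 with hf
  -- counting lemma
  have hcount : ∀ q r, 1 ≤ q → q ≤ k → 1 ≤ r → r ≤ m →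
      ((Finset.Icc 1 k).filter (fun q' => f q' ≤ (q - 1) * m + r)) =
        Finset.Icc 1 (q - 1 + (if t + 1 ≤ r then 1 else 0)) := by
    intro q r hq1 hq2 hr1 hr2
    obtain ⟨q0, rfl⟩ : ∃ q0, q = q0 + 1 := ⟨q - 1, by omega⟩
    ext q'
    simp only [Finset.mem_filter, Finset.mem_Icc, hf, hmed, Nat.add_sub_cancel]
    constructor
    · rintro ⟨⟨h1, h2⟩, h3⟩
      refine ⟨h1, ?_⟩
      obtain ⟨q0', rfl⟩ : ∃ q0', q' = q0' + 1 := ⟨q' - 1, by omega⟩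
      simp only [Nat.add_sub_cancel] at h3
      have hle : q0' ≤ q0 := by
        by_contra hgt
        push_neg at hgt
        have : (q0 + 1) * m ≤ q0' * m := Nat.mul_le_mul_right m (by omega)
        nlinarith
      split
      · omega
      · rename_i hrt
        by_contra h
        have : q0' = q0 := by omega
        subst this
        omega
    · rintro ⟨h1, h2⟩
      obtain ⟨q0', rfl⟩ : ∃ q0', q' = q0' + 1 := ⟨q' - 1, by omega⟩
      simp only [Nat.add_sub_cancel]
      refine ⟨⟨h1, ?_⟩, ?_⟩
      · split at h2 <;> omega
      · by_cases hrt : t + 1 ≤ r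
        · simp only [if_pos hrt] at h2
          have : q0' * m ≤ q0 * m := Nat.mul_le_mul_right m (by omega)
          omega
        · simp only [if_neg hrt] at h2
          -- here q0' + 1 ≤ q0, so q0' * m + m ≤ q0 * m
          have hq0 : q0' + 1 ≤ q0 := by omega
          have : (q0' + 1) * m ≤ q0 * m := Nat.mul_le_mul_right m hq0
          nlinarith
  -- real preliminaries
  have hkR : (0:ℝ) < k := by exact_mod_cast hk
  have hmR : (0:ℝ) < m := by exact_mod_cast hmpos
  have hnR0 : (0:ℝ) < n := by positivity
  have hnR : (n:ℝ) = k * m := by exact_mod_cast congrArg (Nat.cast (R := ℝ)) hnkm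
  -- per-term lemma
  have hterm : ∀ q r, 1 ≤ q → q ≤ k → 1 ≤ r → r ≤ m →
      |∑ j ∈ Finset.Icc 1 ((q - 1) * m + r),
          ((if j ∈ C then (1 : ℝ) / k else 0) - 1 / n)|
        = (if t + 1 ≤ r then (m : ℝ) - r else (r : ℝ)) / n := by
    intro q r hq1 hq2 hr1 hr2
    have hinter : Finset.Icc 1 ((q - 1) * m + r) ∩ C =
        ((Finset.Icc 1 k).filter (fun q' => f q' ≤ (q - 1) * m + r)).image f := by
      ext x
      simp only [Finset.mem_inter, Finset.mem_image, Finset.mem_filter, Finset.mem_Icc, hC]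
      constructor
      · rintro ⟨⟨hx1, hx2⟩, a, ha, rfl⟩
        exact ⟨a, ⟨ha, hx2⟩, rfl⟩
      · rintro ⟨a, ⟨ha, hle⟩, rfl⟩
        refine ⟨⟨?_, hle⟩, a, ha, rfl⟩
        simp only [hf]
        omega
    have hinj : Set.InjOn f
        ((Finset.Icc 1 k).filter (fun q' => f q' ≤ (q - 1) * m + r)) := by
      intro a ha b hb hab
      simp only [Finset.coe_filter, Set.mem_setOf_eq, Finset.mem_Icc] at ha hb
      simp only [hf] at hab
      have h2 : (a - 1) * m = (b - 1) * m := by omega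
      have := Nat.eq_of_mul_eq_mul_right hmpos h2
      omega
    have hcard : (Finset.Icc 1 ((q - 1) * m + r) ∩ C).card
        = q - 1 + (if t + 1 ≤ r then 1 else 0) := by
      rw [hinter, Finset.card_image_of_injOn hinj, hcount q r hq1 hq2 hr1 hr2,
        Nat.card_Icc]
      omega
    rw [Finset.sum_sub_distrib, Finset.sum_ite_mem, Finset.sum_const, Finset.sum_const,
      hcard, Nat.card_Icc]
    have hq1R : (1:ℝ) ≤ q := by exact_mod_cast hq1
    have hcastq : ((q - 1 : ℕ) : ℝ) = (q:ℝ) - 1 := by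
      have : (1:ℕ) ≤ q := hq1
      push_cast [Nat.cast_sub this]
      ring
    have hi : ((q - 1) * m + r + 1 - 1 : ℕ) = (q - 1) * m + r := by omega
    rw [hi]
    have hcasti : (((q - 1) * m + r : ℕ) : ℝ) = ((q:ℝ) - 1) * m + r := by
      push_cast [hcastq]
      ring
    by_cases hrt : t + 1 ≤ r
    · rw [if_pos hrt, if_pos hrt, nsmul_eq_mul, nsmul_eq_mul, hcasti]
      have hc1 : ((q - 1 + 1 : ℕ) : ℝ) = (q:ℝ) := by
        push_cast [hcastq]; ring
      rw [hc1]
      have hval : (q:ℝ) * ((1:ℝ)/k) - (((q:ℝ) - 1) * m + r) * ((1:ℝ)/n)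
          = ((m:ℝ) - r) / n := by
        rw [hnR]
        field_simp
        ring
      rw [hval, abs_of_nonneg]
      have hrm : (r:ℝ) ≤ m := by exact_mod_cast hr2
      apply div_nonneg (by linarith) (le_of_lt hnR0)
    · rw [if_neg hrt, if_neg hrt, nsmul_eq_mul, nsmul_eq_mul, hcasti]
      have hc1 : ((q - 1 + 0 : ℕ) : ℝ) = (q:ℝ) - 1 := by
        push_cast [hcastq]; ring
      rw [hc1]
      have hval : ((q:ℝ) - 1) * ((1:ℝ)/k) - (((q:ℝ) - 1) * m + r) * ((1:ℝ)/n)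
          = -((r:ℝ) / n) := by
        rw [hnR]
        field_simp
        ring
      rw [hval, abs_neg, abs_of_nonneg]
      · positivity
  -- Gauss sum
  have gauss : ∀ N : ℕ, (∑ j ∈ Finset.range N, (j:ℝ)) * 2 = (N:ℝ) * N - N := by
    intro N
    induction N with
    | zero => simp
    | succ p ih =>
      rw [Finset.sum_range_succ]
      push_cast
      linarith
  -- the main reindexing
  have hsum : ∑ p ∈ Finset.Icc 1 k ×ˢ Finset.Icc 1 m,
        ((if t + 1 ≤ p.2 then (m : ℝ) - p.2 else (p.2 : ℝ)) / n)
      = ∑ i ∈ Finset.Icc 1 n,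
          |∑ j ∈ Finset.Icc 1 i, ((if j ∈ C then (1 : ℝ) / k else 0) - 1 / n)| := by
    refine Finset.sum_nbij' (fun p => (p.1 - 1) * m + p.2)
      (fun i => ((i - 1) / m + 1, (i - 1) % m + 1)) ?_ ?_ ?_ ?_ ?_
    · rintro ⟨q, r⟩ hp
      simp only [Finset.mem_product, Finset.mem_Icc] at hp
      obtain ⟨⟨hq1, hq2⟩, hr1, hr2⟩ := hp
      simp only [Finset.mem_Icc]
      constructor
      · omega
      · have : (q - 1) * m ≤ (k - 1) * m := Nat.mul_le_mul_right m (by omega)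
        have hkm : (k - 1) * m + m = k * m := by
          obtain ⟨k0, rfl⟩ : ∃ k0, k = k0 + 1 := ⟨k - 1, by omega⟩
          simp [Nat.add_sub_cancel, Nat.add_mul]
        omega
    · intro i hi
      simp only [Finset.mem_Icc] at hi
      simp only [Finset.mem_product, Finset.mem_Icc]
      have hdivlt : (i - 1) / m < k := by
        rw [Nat.div_lt_iff_lt_mul hmpos]
        omega
      exact ⟨⟨Nat.succ_le_succ (Nat.zero_le _), hdivlt⟩,
        Nat.succ_le_succ (Nat.zero_le _), Nat.mod_lt _ hmpos⟩
    · rintro ⟨q, r⟩ hp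
      simp only [Finset.mem_product, Finset.mem_Icc] at hp
      obtain ⟨⟨hq1, hq2⟩, hr1, hr2⟩ := hp
      have h1 : (q - 1) * m + r - 1 = (q - 1) * m + (r - 1) := by omega
      have hd : ((q - 1) * m + (r - 1)) / m = q - 1 := by
        rw [Nat.mul_comm, Nat.mul_add_div hmpos, Nat.div_eq_of_lt (by omega),
          Nat.add_zero]
      have hmo : ((q - 1) * m + (r - 1)) % m = r - 1 := by
        rw [Nat.mul_comm, Nat.mul_add_mod, Nat.mod_eq_of_lt (by omega)]
      simp only [h1, hd, hmo, Prod.mk.injEq]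
      omega
    · intro i hi
      simp only [Finset.mem_Icc] at hi
      simp only [Nat.add_sub_cancel]
      have h2 : (i - 1) / m * m + (i - 1) % m = i - 1 := by
        rw [Nat.mul_comm]; exact Nat.div_add_mod _ _
      omega
    · rintro ⟨q, r⟩ hp
      simp only [Finset.mem_product, Finset.mem_Icc] at hp
      obtain ⟨⟨hq1, hq2⟩, hr1, hr2⟩ := hp
      exact (hterm q r hq1 hq2 hr1 hr2).symm
  -- compute the product sum
  have hprod : ∑ p ∈ Finset.Icc 1 k ×ˢ Finset.Icc 1 m,
        ((if t + 1 ≤ p.2 then (m : ℝ) - p.2 else (p.2 : ℝ)) / n)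
      = (k : ℝ) * (((t:ℝ) * t + t) / n) := by
    rw [Finset.sum_product]
    have hinner : ∑ r ∈ Finset.Icc 1 m,
        ((if t + 1 ≤ r then (m : ℝ) - r else (r : ℝ)) / n) = ((t:ℝ) * t + t) / n := by
      have hsplit : Finset.Icc 1 m = Finset.Ioc 0 m := Finset.Icc_add_one_left_eq_Ioc 0 m
      rw [hsplit, ← Finset.sum_Ioc_consecutive _ (Nat.zero_le t) (by omega : t ≤ m)]
      have h1 : ∑ r ∈ Finset.Ioc 0 t,
          ((if t + 1 ≤ r then (m : ℝ) - r else (r : ℝ)) / n)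
          = (∑ r ∈ Finset.Ioc 0 t, (r:ℝ)) / n := by
        rw [Finset.sum_div]
        apply Finset.sum_congr rfl
        intro r hr
        simp only [Finset.mem_Ioc] at hr
        rw [if_neg (by omega)]
      have h2 : ∑ r ∈ Finset.Ioc t m,
          ((if t + 1 ≤ r then (m : ℝ) - r else (r : ℝ)) / n)
          = (∑ r ∈ Finset.Ioc t m, ((m:ℝ) - r)) / n := by
        rw [Finset.sum_div]
        apply Finset.sum_congr rfl
        intro r hr
        simp only [Finset.mem_Ioc] at hr
        rw [if_pos (by omega)]
      rw [h1, h2]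
      have e1 : ∑ r ∈ Finset.Ioc 0 t, (r:ℝ) = ((t:ℝ) * t + t) / 2 := by
        have : Finset.Ioc 0 t = Finset.Ico 1 (t + 1) := by
          rw [← Finset.Icc_add_one_left_eq_Ioc, Finset.Ico_add_one_right_eq_Icc, zero_add]
        rw [this, Finset.sum_Ico_eq_sum_range]
        simp only [Nat.add_sub_cancel]
        push_cast
        rw [Finset.sum_add_distrib, Finset.sum_const, Finset.card_range, nsmul_eq_mul,
          mul_one]
        have := gauss t
        push_cast
        linarith
      have e2 : ∑ r ∈ Finset.Ioc t m, ((m:ℝ) - r) = ((t:ℝ) * t + t) / 2 := by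
        have : Finset.Ioc t m = Finset.Ico (t + 1) (m + 1) := by
          rw [← Finset.Icc_add_one_left_eq_Ioc, Finset.Ico_add_one_right_eq_Icc]
        rw [this, Finset.sum_Ico_eq_sum_range]
        have hcard : m + 1 - (t + 1) = t + 1 := by omega
        rw [hcard]
        have : ∀ j ∈ Finset.range (t + 1), (m:ℝ) - ((t + 1 + j : ℕ) : ℝ)
            = (t:ℝ) - j := by
          intro j hj
          have : (m:ℝ) = 2 * t + 1 := by exact_mod_cast congrArg (Nat.cast (R := ℝ)) hm'
          push_cast [this]
          ring
        rw [Finset.sum_congr rfl this, Finset.sum_sub_distrib, Finset.sum_const,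
          Finset.card_range, nsmul_eq_mul]
        have := gauss (t + 1)
        push_cast at this ⊢
        linarith
      rw [e1, e2]
      ring
    refine Eq.trans (Finset.sum_congr rfl fun x _ => hinner) ?_
    rw [Finset.sum_const, Nat.card_Icc, Nat.add_sub_cancel, nsmul_eq_mul]
  -- put it all together
  unfold EMD
  rw [← hsum, hprod]
  have hn1 : (n:ℝ) - 1 ≠ 0 := by
    have : (2:ℝ) ≤ n := by exact_mod_cast hn
    linarith
  have hmc : (m:ℝ) = 2 * t + 1 := by exact_mod_cast congrArg (Nat.cast (R := ℝ)) hm'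
  rw [hnR, hmc]
  have hk0 : (k:ℝ) ≠ 0 := ne_of_gt hkR
  have hden : (k:ℝ) * (2 * t + 1) ≠ 0 := by positivity
  have hden1 : (k:ℝ) * (2 * t + 1) - 1 ≠ 0 := by
    rw [← hmc, ← hnR]
    exact hn1
  field_simp
  ring
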